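/- arXiv:1907.09644 — 10 statements merged into one kernel-verified Lean document; each statement's English description precedes it below -/
import Mathlib

section
/- The dual of a demimatroid is a demimatroid, and the double dual equals the original: if M = (E, ρ) is a demimatroid and ρ*(X) := |X| + ρ(E \ X) − ρ(E), then (E, ρ*) is a demimatroid and ρ** = ρ. -/
open Finset

/-- A demimatroid on ground set `E`: a nonnegative integer-valued function on subsets
with `ρ ∅ = 0` and `ρ X ≤ ρ (X ∪ {x}) ≤ ρ X + 1`. -/
def IsDemimatroid {α : Type*} [DecidableEq α] (E : Finset α) (ρ : Finset α → ℤ) : Prop :=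
  ρ ∅ = 0 ∧ (∀ X ⊆ E, 0 ≤ ρ X) ∧
    ∀ X ⊆ E, ∀ x ∈ E, ρ X ≤ ρ (insert x X) ∧ ρ (insert x X) ≤ ρ X + 1

/-- The dual rank function `ρ*(X) = |X| + ρ(E \ X) - ρ(E)`. -/
def dualFn {α : Type*} [DecidableEq α] (E : Finset α) (ρ : Finset α → ℤ) : Finset α → ℤ :=
  fun X => X.card + ρ (E \ X) - ρ E

lemma union_bound {α : Type*} [DecidableEq α] (E : Finset α) (ρ : Finset α → ℤ)
    (h : IsDemimatroid E ρ) (S : Finset α) (hS : S ⊆ E) :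
    ∀ A ⊆ E, ρ A ≤ ρ (A ∪ S) ∧ ρ (A ∪ S) ≤ ρ A + S.card := by
  induction S using Finset.induction with
  | empty => intro A _; simp
  | @insert a s hx ih =>
    intro A hA
    have haE : a ∈ E := hS (mem_insert_self a s)
    have hsE : s ⊆ E := fun y hy => hS (mem_insert_of_mem hy)
    have h1 := ih hsE A hA
    have hAs : A ∪ s ⊆ E := union_subset hA hsE
    have h2 := h.2.2 (A ∪ s) hAs a haE
    constructor
    · calc ρ A ≤ ρ (A ∪ s) := h1.1
        _ ≤ ρ (insert a (A ∪ s)) := h2.1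
        _ = ρ (A ∪ insert a s) := by rw [Finset.union_insert]
    · have : ρ (insert a (A ∪ s)) ≤ ρ A + s.card + 1 := le_trans h2.2 (by linarith [h1.2])
      rw [Finset.union_insert]
      rw [Finset.card_insert_of_notMem hx]
      push_cast
      linarith

theorem dual_isDemimatroid_and_dual_dual {α : Type*} [DecidableEq α]
    (E : Finset α) (ρ : Finset α → ℤ) (h : IsDemimatroid E ρ) :
    IsDemimatroid E (dualFn E ρ) ∧ ∀ X ⊆ E, dualFn E (dualFn E ρ) X = ρ X := by
  have hdualE : dualFn E ρ E = E.card - ρ E := by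
    simp [dualFn, h.1]
  refine ⟨⟨?_, ?_, ?_⟩, ?_⟩
  · simp [dualFn]
  · intro X hX
    have := (union_bound E ρ h X hX (E \ X) (sdiff_subset)).2
    rw [Finset.sdiff_union_of_subset hX] at this
    simp only [dualFn]
    linarith
  · intro X hX x hxE
    by_cases hxX : x ∈ X
    · rw [Finset.insert_eq_self.mpr hxX]
      constructor <;> linarith
    · have hins : insert x ((E \ X).erase x) = E \ X := by
        apply Finset.insert_erase
        simp [Finset.mem_sdiff, hxE, hxX]
      have hsub : (E \ X).erase x ⊆ E := (erase_subset _ _).trans sdiff_subset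
      have h2 := h.2.2 ((E \ X).erase x) hsub x hxE
      rw [hins] at h2
      have hsd : E \ insert x X = (E \ X).erase x := by
        ext y
        simp only [Finset.mem_sdiff, Finset.mem_erase, Finset.mem_insert]
        tauto
      have hcard : (insert x X).card = X.card + 1 := Finset.card_insert_of_notMem hxX
      simp only [dualFn, hsd, hcard]
      push_cast
      constructor <;> linarith
  · intro X hX
    simp only [dualFn, h.1]
    rw [Finset.sdiff_sdiff_eq_self hX]
    have hcard : (E \ X).card = E.card - X.card := Finset.card_sdiff_of_subset hX
    have hle : X.card ≤ E.card := Finset.card_le_card hX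
    have : ((E \ X).card : ℤ) = (E.card : ℤ) - X.card := by
      rw [hcard]; push_cast [hle]; ring
    rw [this, Finset.sdiff_self, h.1]
    ring
end

section
/- If M = (E, ρ) is a demimatroid, then the supplement function ρ⋄(X) := ρ(E) − ρ(E \ X) defines a demimatroid (E, ρ⋄). -/
open Finset

lemma demimatroid_mono {α : Type*} [DecidableEq α] {E : Finset α} {ρ : Finset α → ℤ}
    (h : IsDemimatroid E ρ) : ∀ B ⊆ E, ∀ A ⊆ B, ρ A ≤ ρ B := by
  intro B hB A hA
  obtain ⟨-, -, h3⟩ := h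
  have key : ∀ n : ℕ, ∀ A ⊆ B, (B \ A).card = n → ρ A ≤ ρ B := by
    intro n
    induction n with
    | zero =>
      intro A hA hcard
      have : B \ A = ∅ := Finset.card_eq_zero.mp hcard
      have : B ⊆ A := fun x hx => by
        by_contra hxA
        exact absurd (Finset.mem_sdiff.mpr ⟨hx, hxA⟩) (by simp [this])
      have : A = B := Finset.Subset.antisymm hA this
      simp [this]
    | succ n ih =>
      intro A hA hcard
      have hne : (B \ A).Nonempty := by
        rw [← Finset.card_pos, hcard]; omega
      obtain ⟨x, hx⟩ := hne
      have hxB : x ∈ B := (Finset.mem_sdiff.mp hx).1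
      have hxA : x ∉ A := (Finset.mem_sdiff.mp hx).2
      have hsub : insert x A ⊆ B := Finset.insert_subset hxB hA
      have hcard' : (B \ insert x A).card = n := by
        have : B \ insert x A = (B \ A).erase x := by
          ext y; simp [Finset.mem_sdiff, Finset.mem_erase]; tauto
        rw [this, Finset.card_erase_of_mem hx, hcard]; omega
      have := (h3 A (hA.trans hB) x (hB hxB)).1
      exact this.trans (ih _ hsub hcard')
  exact key _ A hA rfl

theorem supplement_isDemimatroid {α : Type*} [DecidableEq α]
    (E : Finset α) (ρ : Finset α → ℤ) (h : IsDemimatroid E ρ) :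
    IsDemimatroid E (fun X => ρ E - ρ (E \ X)) := by
  obtain ⟨h1, h2, h3⟩ := h
  refine ⟨by simp [h1], ?_, ?_⟩
  · intro X hX
    simp only
    have := demimatroid_mono ⟨h1, h2, h3⟩ E le_rfl (E \ X) (Finset.sdiff_subset)
    omega
  · intro X hX x hx
    simp only
    constructor
    · have : E \ insert x X ⊆ E \ X := Finset.sdiff_subset_sdiff le_rfl (by simp)
      have := demimatroid_mono ⟨h1, h2, h3⟩ (E \ X) Finset.sdiff_subset _ this
      omega
    · by_cases hxX : x ∈ X
      · have : insert x X = X := Finset.insert_eq_self.mpr hxX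
        rw [this]; omega
      · have heq : E \ X = insert x (E \ insert x X) := by
          ext y
          simp only [Finset.mem_sdiff, Finset.mem_insert]
          constructor
          · rintro ⟨hyE, hyX⟩
            by_cases hyx : y = x
            · exact Or.inl hyx
            · exact Or.inr ⟨hyE, by simp [hyx, hyX]⟩
          · rintro (rfl | ⟨hyE, hy⟩)
            · exact ⟨hx, hxX⟩
            · exact ⟨hyE, fun hc => hy (Or.inr hc)⟩
        have := (h3 (E \ insert x X) (Finset.sdiff_subset) x hx).2
        rw [heq]
        omega
end

section
/- If α and β are demimatroids on the same finite ground set E, then their pointwise maximum α ∨ β and pointwise minimum α ∧ β are demimatroids; moreover, the set of demimatroids on E with these operations forms a bounded distributive lattice whose maximum is X ↦ |X| and whose minimum is X ↦ 0. -/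
open Finset

lemma demimatroid_le_card {α : Type*} [DecidableEq α] (E : Finset α) (a : Finset α → ℤ)
    (ha : IsDemimatroid E a) : ∀ X ⊆ E, a X ≤ X.card := by
  obtain ⟨h0, hnn, hstep⟩ := ha
  intro X
  induction X using Finset.induction_on with
  | empty => intro _; simp [h0]
  | @insert x X hx ih =>
    intro hsub
    have hxE : x ∈ E := hsub (mem_insert_self x X)
    have hXE : X ⊆ E := (Finset.subset_insert x X).trans hsub
    have := (hstep X hXE x hxE).2
    have := ih hXE
    rw [Finset.card_insert_of_notMem hx]
    push_cast
    omega

theorem demimatroids_bounded_distributive_lattice {α : Type*} [DecidableEq α] (E : Finset α) :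
    (∀ a b : Finset α → ℤ, IsDemimatroid E a → IsDemimatroid E b →
        IsDemimatroid E (fun X => max (a X) (b X)) ∧
        IsDemimatroid E (fun X => min (a X) (b X))) ∧
    IsDemimatroid E (fun X => (X.card : ℤ)) ∧
    IsDemimatroid E (fun _ => (0 : ℤ)) ∧
    (∀ a : Finset α → ℤ, IsDemimatroid E a → ∀ X ⊆ E, 0 ≤ a X ∧ a X ≤ X.card) ∧
    (∀ a b c : Finset α → ℤ, IsDemimatroid E a → IsDemimatroid E b → IsDemimatroid E c →
        ∀ X ⊆ E, min (a X) (max (b X) (c X)) = max (min (a X) (b X)) (min (a X) (c X))) := by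
  refine ⟨?_, ?_, ?_, ?_, ?_⟩
  · rintro a b ⟨a0, ann, astep⟩ ⟨b0, bnn, bstep⟩
    constructor
    · refine ⟨by simp [a0, b0], fun X hX => le_max_of_le_left (ann X hX), fun X hX x hx => ?_⟩
      obtain ⟨h1, h2⟩ := astep X hX x hx
      obtain ⟨h3, h4⟩ := bstep X hX x hx
      constructor <;> simp only [max_le_iff, le_max_iff] <;> omega
    · refine ⟨by simp [a0, b0], fun X hX => le_min (ann X hX) (bnn X hX), fun X hX x hx => ?_⟩
      obtain ⟨h1, h2⟩ := astep X hX x hx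
      obtain ⟨h3, h4⟩ := bstep X hX x hx
      constructor <;> simp only [min_le_iff, le_min_iff] <;> omega
  · refine ⟨by simp, fun X _ => by positivity, fun X _ x _ => ?_⟩
    simp only
    by_cases hx : x ∈ X
    · simp [Finset.insert_eq_self.mpr hx]
    · rw [Finset.card_insert_of_notMem hx]; push_cast; omega
  · exact ⟨rfl, fun _ _ => le_refl _, fun _ _ _ _ => by simp⟩
  · exact fun a ha X hX => ⟨ha.2.1 X hX, demimatroid_le_card E a ha X hX⟩
  · intro a b c _ _ _ X _
    rcases le_total (b X) (c X) with h | h <;>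
      rcases le_total (a X) (b X) with h' | h' <;>
      rcases le_total (a X) (c X) with h'' | h'' <;>
      simp [min_def, max_def] <;> omega
end

section
/- For a demimatroid M = (E, ρ) of rank k = ρ(E), the image of ρ is exactly {0, 1, …, k}, and the Wei numbers satisfy 0 < d_1(M) < d_2(M) < ⋯ < d_k(M) ≤ |E|. -/
open Finset

/-- The `r`-th Wei number `d_r(M) = min { |X| : X ⊆ E, ρ(X) = r }`. -/
noncomputable def weiNumber {α : Type*} [DecidableEq α] (E : Finset α) (ρ : Finset α → ℤ)
    (r : ℤ) : ℕ :=
  sInf {m : ℕ | ∃ X ⊆ E, ρ X = r ∧ X.card = m}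

private lemma demi_mono_aux {α : Type*} [DecidableEq α]
    (E : Finset α) (ρ : Finset α → ℤ) (h : IsDemimatroid E ρ) :
    ∀ n : ℕ, ∀ X Y : Finset α, X ⊆ Y → Y ⊆ E → (Y \ X).card = n → ρ X ≤ ρ Y := by
  intro n
  induction n with
  | zero =>
    intro X Y hXY hYE hc
    have : Y \ X = ∅ := Finset.card_eq_zero.mp hc
    have hYX : Y ⊆ X := Finset.sdiff_eq_empty_iff_subset.mp this
    rw [Finset.Subset.antisymm hXY hYX]
  | succ n ih =>
    intro X Y hXY hYE hc
    have hne : (Y \ X).Nonempty := by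
      rw [← Finset.card_pos, hc]; omega
    obtain ⟨x, hx⟩ := hne
    have hxY : x ∈ Y := (Finset.mem_sdiff.mp hx).1
    have hxX : x ∉ X := (Finset.mem_sdiff.mp hx).2
    have h1 := (h.2.2 X (hXY.trans hYE) x (hYE hxY)).1
    have hsub : insert x X ⊆ Y := Finset.insert_subset hxY hXY
    have hcard : (Y \ insert x X).card = n := by
      have : Y \ insert x X = (Y \ X).erase x := by
        ext a; simp [Finset.mem_sdiff, Finset.mem_erase]; tauto
      rw [this, Finset.card_erase_of_mem hx, hc]; omega
    exact h1.trans (ih (insert x X) Y hsub hYE hcard)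

private lemma demi_between_aux {α : Type*} [DecidableEq α]
    (E : Finset α) (ρ : Finset α → ℤ) (h : IsDemimatroid E ρ) :
    ∀ n : ℕ, ∀ X Y : Finset α, X ⊆ Y → Y ⊆ E → (Y \ X).card = n →
      ∀ r : ℤ, ρ X ≤ r → r ≤ ρ Y → ∃ Z, X ⊆ Z ∧ Z ⊆ Y ∧ ρ Z = r := by
  intro n
  induction n with
  | zero =>
    intro X Y hXY hYE hc r h1 h2
    have : Y \ X = ∅ := Finset.card_eq_zero.mp hc
    have hYX : Y ⊆ X := Finset.sdiff_eq_empty_iff_subset.mp this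
    have hXY' : X = Y := Finset.Subset.antisymm hXY hYX
    exact ⟨X, Finset.Subset.refl X, hXY, by rw [hXY'] at h1 ⊢; omega⟩
  | succ n ih =>
    intro X Y hXY hYE hc r h1 h2
    rcases eq_or_lt_of_le h1 with heq | hlt
    · exact ⟨X, Finset.Subset.refl X, hXY, heq⟩
    · have hne : (Y \ X).Nonempty := by
        rw [← Finset.card_pos, hc]; omega
      obtain ⟨x, hx⟩ := hne
      have hxY : x ∈ Y := (Finset.mem_sdiff.mp hx).1
      have hstep := h.2.2 X (hXY.trans hYE) x (hYE hxY)
      have hsub : insert x X ⊆ Y := Finset.insert_subset hxY hXY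
      have hcard : (Y \ insert x X).card = n := by
        have : Y \ insert x X = (Y \ X).erase x := by
          ext a; simp [Finset.mem_sdiff, Finset.mem_erase]; tauto
        rw [this, Finset.card_erase_of_mem hx, hc]; omega
      obtain ⟨Z, hZ1, hZ2, hZ3⟩ := ih (insert x X) Y hsub hYE hcard r (by omega) h2
      exact ⟨Z, (Finset.subset_insert x X).trans hZ1, hZ2, hZ3⟩

theorem demimatroid_levels_and_wei_chain {α : Type*} [DecidableEq α]
    (E : Finset α) (ρ : Finset α → ℤ) (h : IsDemimatroid E ρ) (hnt : 1 ≤ ρ E) :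
    ((∀ r : ℤ, 0 ≤ r → r ≤ ρ E → ∃ X ⊆ E, ρ X = r) ∧ ∀ X ⊆ E, ρ X ≤ ρ E) ∧
    0 < weiNumber E ρ 1 ∧
    (∀ r : ℤ, 1 ≤ r → r < ρ E → weiNumber E ρ r < weiNumber E ρ (r + 1)) ∧
    weiNumber E ρ (ρ E) ≤ E.card := by
  have hlevels : ∀ r : ℤ, 0 ≤ r → r ≤ ρ E → ∃ X ⊆ E, ρ X = r := by
    intro r hr0 hrE
    obtain ⟨Z, _, hZE, hZr⟩ := demi_between_aux E ρ h (E \ ∅).card ∅ E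
      (Finset.empty_subset E) (Finset.Subset.refl E) rfl r (by rw [h.1]; exact hr0) hrE
    exact ⟨Z, hZE, hZr⟩
  have hmono : ∀ X ⊆ E, ρ X ≤ ρ E := fun X hX =>
    demi_mono_aux E ρ h (E \ X).card X E hX (Finset.Subset.refl E) rfl
  have hwei_mem : ∀ r : ℤ, 0 ≤ r → r ≤ ρ E →
      ∃ X ⊆ E, ρ X = r ∧ X.card = weiNumber E ρ r := by
    intro r hr0 hrE
    obtain ⟨X, hXE, hXr⟩ := hlevels r hr0 hrE
    have hne : {m : ℕ | ∃ X ⊆ E, ρ X = r ∧ X.card = m}.Nonempty :=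
      ⟨X.card, X, hXE, hXr, rfl⟩
    exact Nat.sInf_mem hne
  refine ⟨⟨hlevels, hmono⟩, ?_, ?_, ?_⟩
  · obtain ⟨X, hXE, hX1, hXc⟩ := hwei_mem 1 (by omega) hnt
    rcases Nat.eq_zero_or_pos (weiNumber E ρ 1) with h0 | hp
    · rw [h0] at hXc
      have : X = ∅ := Finset.card_eq_zero.mp hXc
      rw [this, h.1] at hX1; omega
    · exact hp
  · intro r hr1 hrE
    obtain ⟨X, hXE, hXr, hXc⟩ := hwei_mem (r + 1) (by omega) (by omega)
    obtain ⟨Z, _, hZX, hZr⟩ := demi_between_aux E ρ h (X \ ∅).card ∅ X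
      (Finset.empty_subset X) hXE rfl r (by rw [h.1]; omega) (by omega)
    have hZne : Z ≠ X := fun heq => by rw [heq, hXr] at hZr; omega
    have hlt : Z.card < X.card :=
      Finset.card_lt_card (Finset.ssubset_iff_subset_ne.mpr ⟨hZX, hZne⟩)
    have hle : weiNumber E ρ r ≤ Z.card :=
      Nat.sInf_le ⟨Z, hZX.trans hXE, hZr, rfl⟩
    omega
  · exact Nat.sInf_le ⟨E, Finset.Subset.refl E, rfl, rfl⟩
end

section
/- Generalized Singleton bound: for a demimatroid M = (E, ρ) of rank k = ρ(E), one has k + d_r(M) ≤ |E| + r for all 1 ≤ r ≤ k. -/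
open Finset

lemma demimatroid_aux {α : Type*} [DecidableEq α]
    (E : Finset α) (ρ : Finset α → ℤ) (h : IsDemimatroid E ρ) :
    ∀ n : ℕ, ∀ X ⊆ E, X.card = n → ∀ r : ℤ, 0 ≤ r → r ≤ ρ X →
      ∃ Y ⊆ X, ρ Y = r ∧ (Y.card : ℤ) ≤ (X.card : ℤ) - (ρ X - r) := by
  obtain ⟨h0, _, hstep⟩ := h
  intro n
  induction n with
  | zero =>
    intro X _ hcard r hr0 hr
    rw [Finset.card_eq_zero] at hcard
    subst hcard
    exact ⟨∅, Finset.Subset.refl _, by omega, by simp; omega⟩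
  | succ n ih =>
    intro X hXE hcard r hr0 hr
    by_cases hXr : ρ X = r
    · exact ⟨X, Finset.Subset.refl _, hXr, by omega⟩
    · have hX : X.Nonempty := by
        rcases X.eq_empty_or_nonempty with rfl | hne
        · omega
        · exact hne
      obtain ⟨x, hx⟩ := hX
      have hxE : x ∈ E := hXE hx
      have hX' : X.erase x ⊆ E := (Finset.erase_subset _ _).trans hXE
      have hins : insert x (X.erase x) = X := Finset.insert_erase hx
      have hs := hstep (X.erase x) hX' x hxE
      rw [hins] at hs
      have hcard' : (X.erase x).card = n := by
        rw [Finset.card_erase_of_mem hx, hcard]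
        omega
      have hr' : r ≤ ρ (X.erase x) := by omega
      obtain ⟨Y, hYX', hYr, hYc⟩ := ih (X.erase x) hX' hcard' r hr0 hr'
      refine ⟨Y, hYX'.trans (Finset.erase_subset _ _), hYr, ?_⟩
      rw [hcard'] at hYc
      have : (X.card : ℤ) = n + 1 := by omega
      omega

theorem generalized_singleton_bound {α : Type*} [DecidableEq α]
    (E : Finset α) (ρ : Finset α → ℤ) (h : IsDemimatroid E ρ) :
    ∀ r : ℤ, 1 ≤ r → r ≤ ρ E → ρ E + (weiNumber E ρ r : ℤ) ≤ E.card + r := by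
  intro r hr1 hrE
  obtain ⟨Y, hYE, hYr, hYc⟩ :=
    demimatroid_aux E ρ h E.card E (Finset.Subset.refl _) rfl r (by omega) hrE
  have hle : weiNumber E ρ r ≤ Y.card :=
    Nat.sInf_le ⟨Y, hYE, hYr, rfl⟩
  have : (weiNumber E ρ r : ℤ) ≤ (Y.card : ℤ) := by exact_mod_cast hle
  omega
end

section
/- Wei duality for demimatroids: if M = (E, ρ) is a demimatroid with n = |E| and k = ρ(E), then {d_1(M), …, d_k(M)} and {n+1−d_1(M*), …, n+1−d_{n−k}(M*)} are disjoint subsets whose union is {1, …, n}. -/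
open Finset

namespace WeiAux

variable {α : Type*} [DecidableEq α] (E : Finset α) (ρ : Finset α → ℤ)

/-- max of ρ over subsets of `E` of size `m` (as a nonneg integer). -/
noncomputable def g (m : ℕ) : ℤ :=
  (((E.powersetCard m).sup fun X => (ρ X).toNat : ℕ) : ℤ)

variable {E ρ}

lemma rho_union (h : IsDemimatroid E ρ) (S : Finset α) (hS : S ⊆ E)
    (X : Finset α) (hX : X ⊆ E) :
    ρ X ≤ ρ (X ∪ S) ∧ ρ (X ∪ S) ≤ ρ X + S.card := by
  induction S using Finset.induction_on with
  | empty => simp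
  | @insert a S ha ih =>
    have haE : a ∈ E := hS (mem_insert_self a S)
    have hS' : S ⊆ E := (Finset.subset_insert a S).trans hS
    obtain ⟨ih1, ih2⟩ := ih hS'
    have hsub : X ∪ S ⊆ E := Finset.union_subset hX hS'
    obtain ⟨h1, h2⟩ := h.2.2 (X ∪ S) hsub a haE
    rw [Finset.union_insert, Finset.card_insert_of_notMem ha]
    constructor
    · exact ih1.trans h1
    · push_cast
      linarith

lemma rho_mono (h : IsDemimatroid E ρ) {X Y : Finset α} (hXY : X ⊆ Y) (hY : Y ⊆ E) :
    ρ X ≤ ρ Y := by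
  have := (rho_union h Y hY X (hXY.trans hY)).1
  rwa [Finset.union_eq_right.mpr hXY] at this

lemma rho_erase (h : IsDemimatroid E ρ) {X : Finset α} (hX : X ⊆ E) {x : α} (hx : x ∈ X) :
    ρ (X.erase x) ≤ ρ X ∧ ρ X ≤ ρ (X.erase x) + 1 := by
  have h1 := h.2.2 (X.erase x) ((Finset.erase_subset x X).trans hX) x (hX hx)
  rwa [Finset.insert_erase hx] at h1

lemma exists_rank (h : IsDemimatroid E ρ) :
    ∀ X : Finset α, X ⊆ E → ∀ r : ℤ, 0 ≤ r → r ≤ ρ X → ∃ Y, Y ⊆ X ∧ ρ Y = r := by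
  intro X
  induction X using Finset.strongInduction with
  | _ X ih =>
    intro hX r hr0 hr
    by_cases heq : ρ X = r
    · exact ⟨X, Finset.Subset.refl X, heq⟩
    · have hlt : r < ρ X := lt_of_le_of_ne hr (fun e => heq e.symm)
      have hXne : X.Nonempty := by
        rcases Finset.eq_empty_or_nonempty X with rfl | hne
        · rw [h.1] at hlt; omega
        · exact hne
      obtain ⟨x, hx⟩ := hXne
      have hss : X.erase x ⊂ X := Finset.erase_ssubset hx
      obtain ⟨he1, he2⟩ := rho_erase h hX hx
      obtain ⟨Y, hY1, hY2⟩ := ih (X.erase x) hss ((Finset.erase_subset x X).trans hX)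
        r hr0 (by omega)
      exact ⟨Y, hY1.trans (Finset.erase_subset x X), hY2⟩

lemma g_nonneg (m : ℕ) : 0 ≤ g E ρ m := Int.natCast_nonneg _

lemma g_ge {X : Finset α} (hX : X ⊆ E) {m : ℕ} (hc : X.card = m) : ρ X ≤ g E ρ m := by
  have hmem : X ∈ E.powersetCard m := Finset.mem_powersetCard.mpr ⟨hX, hc⟩
  have := Finset.le_sup (f := fun X => (ρ X).toNat) hmem
  calc ρ X ≤ ((ρ X).toNat : ℤ) := Int.self_le_toNat _
    _ ≤ g E ρ m := by unfold g; exact_mod_cast this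

lemma g_attain (h : IsDemimatroid E ρ) {m : ℕ} (hm : m ≤ E.card) :
    ∃ X, X ⊆ E ∧ X.card = m ∧ ρ X = g E ρ m := by
  have hne : (E.powersetCard m).Nonempty := Finset.powersetCard_nonempty.mpr hm
  obtain ⟨X, hXmem, hXeq⟩ := Finset.exists_mem_eq_sup (E.powersetCard m) hne
    (fun X => (ρ X).toNat)
  obtain ⟨hX, hc⟩ := Finset.mem_powersetCard.mp hXmem
  refine ⟨X, hX, hc, ?_⟩
  have h0 : 0 ≤ ρ X := h.2.1 X hX
  rw [g, hXeq, Int.toNat_of_nonneg h0]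

lemma g_mono (h : IsDemimatroid E ρ) {m m' : ℕ} (hmm : m ≤ m') (hm' : m' ≤ E.card) :
    g E ρ m ≤ g E ρ m' := by
  obtain ⟨X, hX, hc, heq⟩ := g_attain h (hmm.trans hm')
  obtain ⟨X', hXX', hX'E, hc'⟩ := Finset.exists_subsuperset_card_eq (n := m') hX
    (by omega) hm'
  calc g E ρ m = ρ X := heq.symm
    _ ≤ ρ X' := rho_mono h hXX' hX'E
    _ ≤ g E ρ m' := g_ge hX'E hc'

lemma dual_demimatroid (h : IsDemimatroid E ρ) : IsDemimatroid E (dualFn E ρ) := by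
  refine ⟨?_, ?_, ?_⟩
  · simp [dualFn]
  · intro X hX
    have := (rho_union h X hX (E \ X) Finset.sdiff_subset).2
    rw [Finset.sdiff_union_of_subset hX] at this
    simp only [dualFn]
    linarith
  · intro X hX x hx
    by_cases hxX : x ∈ X
    · rw [Finset.insert_eq_self.mpr hxX]; omega
    · have h1 : E \ insert x X = (E \ X).erase x := by
        ext y; simp [Finset.mem_sdiff, Finset.mem_erase, Finset.mem_insert]; tauto
      have hx2 : x ∈ E \ X := Finset.mem_sdiff.mpr ⟨hx, hxX⟩
      obtain ⟨he1, he2⟩ := rho_erase h (Finset.sdiff_subset) hx2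
      simp only [dualFn, h1, Finset.card_insert_of_notMem hxX]
      push_cast
      constructor <;> linarith

lemma rhoE_dual (h : IsDemimatroid E ρ) : dualFn E ρ E = (E.card : ℤ) - ρ E := by
  simp [dualFn, h.1]

lemma g_dual (h : IsDemimatroid E ρ) {m : ℕ} (hm : m ≤ E.card) :
    g E (dualFn E ρ) m = (m : ℤ) + g E ρ (E.card - m) - ρ E := by
  have hd := dual_demimatroid h
  apply le_antisymm
  · obtain ⟨X, hX, hc, heq⟩ := g_attain hd hm
    have hcs : (E \ X).card = E.card - m := by rw [Finset.card_sdiff_of_subset hX, hc]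
    have := g_ge (E := E) (ρ := ρ) (Finset.sdiff_subset) hcs
    rw [← heq]
    simp only [dualFn, hc]
    linarith
  · obtain ⟨Y, hY, hc, heq⟩ := g_attain h (m := E.card - m) (Nat.sub_le _ _)
    have hX : E \ Y ⊆ E := Finset.sdiff_subset
    have hcX : (E \ Y).card = m := by
      rw [Finset.card_sdiff_of_subset hY, hc]; omega
    have hEY : E \ (E \ Y) = Y := Finset.sdiff_sdiff_eq_self hY
    have := g_ge (E := E) (ρ := dualFn E ρ) hX hcX
    simp only [dualFn, hEY, hcX, heq] at this
    linarith

/-- characterization: for `1 ≤ r ≤ ρ E`, `d_r` is a jump point of `g`. -/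
lemma wei_jump (h : IsDemimatroid E ρ) {r : ℤ} (hr1 : 1 ≤ r) (hrk : r ≤ ρ E) :
    1 ≤ weiNumber E ρ r ∧ weiNumber E ρ r ≤ E.card ∧
      g E ρ (weiNumber E ρ r - 1) < g E ρ (weiNumber E ρ r) := by
  set S := {m : ℕ | ∃ X ⊆ E, ρ X = r ∧ X.card = m} with hS
  have hSne : S.Nonempty := by
    obtain ⟨Y, hY, hYr⟩ := exists_rank h E (Finset.Subset.refl E) r (by omega) hrk
    exact ⟨Y.card, Y, hY, hYr, rfl⟩
  have hmem : weiNumber E ρ r ∈ S := Nat.sInf_mem hSne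
  obtain ⟨X, hX, hXr, hXc⟩ := hmem
  set d := weiNumber E ρ r with hd
  have hd1 : 1 ≤ d := by
    by_contra hcon
    have : d = 0 := by omega
    rw [this] at hXc
    rw [Finset.card_eq_zero.mp hXc, h.1] at hXr
    omega
  have hdn : d ≤ E.card := hXc ▸ Finset.card_le_card hX
  refine ⟨hd1, hdn, ?_⟩
  have hgd : r ≤ g E ρ d := hXr ▸ g_ge hX hXc
  have hglt : g E ρ (d - 1) < r := by
    by_contra hcon
    push_neg at hcon
    obtain ⟨Z, hZ, hZc, hZeq⟩ := g_attain h (le_trans (Nat.sub_le _ _) hdn)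
    obtain ⟨Y, hYZ, hYr⟩ := exists_rank h Z hZ r (by omega) (hZeq ▸ hcon)
    have hYS : Y.card ∈ S := ⟨Y, hYZ.trans hZ, hYr, rfl⟩
    have := Nat.sInf_le hYS
    have hYle : Y.card ≤ Z.card := Finset.card_le_card hYZ
    have hdS : sInf S = d := rfl
    omega
  exact lt_of_lt_of_le hglt hgd

/-- converse: each jump point of `g` is a Wei number. -/
lemma jump_wei (h : IsDemimatroid E ρ) {m : ℕ} (hm1 : 1 ≤ m) (hmn : m ≤ E.card)
    (hj : g E ρ (m - 1) < g E ρ m) :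
    ∃ r : ℤ, 1 ≤ r ∧ r ≤ ρ E ∧ m = weiNumber E ρ r := by
  obtain ⟨X, hX, hXc, hXeq⟩ := g_attain h hmn
  refine ⟨g E ρ m, ?_, ?_, ?_⟩
  · have h0 : 0 ≤ g E ρ (m - 1) := g_nonneg _
    omega
  · rw [← hXeq]; exact rho_mono h hX (Finset.Subset.refl E)
  · set S := {m' : ℕ | ∃ X ⊆ E, ρ X = g E ρ m ∧ X.card = m'} with hS
    have hmS : m ∈ S := ⟨X, hX, hXeq, hXc⟩
    have hlb : ∀ m'' ∈ S, m ≤ m'' := by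
      intro m'' hm''
      obtain ⟨Z, hZ, hZr, hZc⟩ := hm''
      by_contra hcon
      push_neg at hcon
      have hZle : ρ Z ≤ g E ρ (m - 1) :=
        le_trans (g_ge hZ hZc) (g_mono h (by omega) (by omega))
      omega
    exact le_antisymm (le_csInf ⟨m, hmS⟩ hlb) (Nat.sInf_le hmS)

end WeiAux

theorem wei_duality {α : Type*} [DecidableEq α]
    (E : Finset α) (ρ : Finset α → ℤ) (h : IsDemimatroid E ρ) :
    Disjoint {m : ℤ | ∃ r : ℤ, 1 ≤ r ∧ r ≤ ρ E ∧ m = (weiNumber E ρ r : ℤ)}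
      {m : ℤ | ∃ r : ℤ, 1 ≤ r ∧ r ≤ (E.card : ℤ) - ρ E ∧
        m = (E.card : ℤ) + 1 - (weiNumber E (dualFn E ρ) r : ℤ)} ∧
    {m : ℤ | ∃ r : ℤ, 1 ≤ r ∧ r ≤ ρ E ∧ m = (weiNumber E ρ r : ℤ)} ∪
      {m : ℤ | ∃ r : ℤ, 1 ≤ r ∧ r ≤ (E.card : ℤ) - ρ E ∧
        m = (E.card : ℤ) + 1 - (weiNumber E (dualFn E ρ) r : ℤ)} =
      Set.Icc 1 (E.card : ℤ) := by
  classical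
  set n := E.card with hn
  have hd := WeiAux.dual_demimatroid h
  -- jump predicate
  set J : ℕ → Prop := fun m => WeiAux.g E ρ (m - 1) < WeiAux.g E ρ m with hJ
  -- characterize set A
  have hA : {m : ℤ | ∃ r : ℤ, 1 ≤ r ∧ r ≤ ρ E ∧ m = (weiNumber E ρ r : ℤ)} =
      {m : ℤ | ∃ m' : ℕ, 1 ≤ m' ∧ m' ≤ n ∧ m = (m' : ℤ) ∧ J m'} := by
    ext m
    simp only [Set.mem_setOf_eq]
    constructor
    · rintro ⟨r, hr1, hrk, rfl⟩
      obtain ⟨h1, h2, h3⟩ := WeiAux.wei_jump h hr1 hrk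
      exact ⟨weiNumber E ρ r, h1, h2, rfl, h3⟩
    · rintro ⟨m', h1, h2, rfl, h3⟩
      obtain ⟨r, hr1, hrk, heq⟩ := WeiAux.jump_wei h h1 h2 h3
      exact ⟨r, hr1, hrk, by rw [heq]⟩
  -- dual jump at m' ↔ ¬ jump at n+1-m'
  have hdual_jump : ∀ m' : ℕ, 1 ≤ m' → m' ≤ n →
      ((WeiAux.g E (dualFn E ρ) (m' - 1) < WeiAux.g E (dualFn E ρ) m') ↔
        ¬ J (n + 1 - m')) := by
    intro m' h1 h2
    have e1 : WeiAux.g E (dualFn E ρ) m' = (m' : ℤ) + WeiAux.g E ρ (n - m') - ρ E :=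
      WeiAux.g_dual h h2
    have e2 : WeiAux.g E (dualFn E ρ) (m' - 1) =
        ((m' - 1 : ℕ) : ℤ) + WeiAux.g E ρ (n - (m' - 1)) - ρ E :=
      WeiAux.g_dual h (by omega)
    have e3 : n - (m' - 1) = n - m' + 1 := by omega
    have e4 : n + 1 - m' - 1 = n - m' := by omega
    have e5 : n + 1 - m' = n - m' + 1 := by omega
    have e6 : n - m' + 1 - 1 = n - m' := by omega
    have hmono : WeiAux.g E ρ (n - m') ≤ WeiAux.g E ρ (n - m' + 1) :=
      WeiAux.g_mono h (by omega) (by omega)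
    have hc : ((m' - 1 : ℕ) : ℤ) = (m' : ℤ) - 1 := by push_cast [Nat.cast_sub h1]; ring
    simp only [hJ, e1, e2, e3, e4, e5, e6, hc, not_lt]
    constructor
    · intro hlt; linarith
    · intro hle; linarith
  -- characterize set B
  have hB : {m : ℤ | ∃ r : ℤ, 1 ≤ r ∧ r ≤ (E.card : ℤ) - ρ E ∧
        m = (E.card : ℤ) + 1 - (weiNumber E (dualFn E ρ) r : ℤ)} =
      {m : ℤ | ∃ m' : ℕ, 1 ≤ m' ∧ m' ≤ n ∧ m = (m' : ℤ) ∧ ¬ J m'} := by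
    have hEdual : dualFn E ρ E = (E.card : ℤ) - ρ E := WeiAux.rhoE_dual h
    ext m
    simp only [Set.mem_setOf_eq]
    constructor
    · rintro ⟨r, hr1, hrk, rfl⟩
      obtain ⟨h1, h2, h3⟩ := WeiAux.wei_jump hd hr1 (hEdual ▸ hrk)
      set d := weiNumber E (dualFn E ρ) r with hdd
      refine ⟨n + 1 - d, by omega, by omega, ?_, ?_⟩
      · push_cast [Nat.cast_sub (by omega : d ≤ n + 1)]; ring
      · exact (hdual_jump d h1 h2).mp h3
    · rintro ⟨m', h1, h2, rfl, h3⟩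
      set m'' := n + 1 - m' with hm''
      have hm''1 : 1 ≤ m'' := by omega
      have hm''2 : m'' ≤ n := by omega
      have hnm : n + 1 - m'' = m' := by omega
      have hj : WeiAux.g E (dualFn E ρ) (m'' - 1) < WeiAux.g E (dualFn E ρ) m'' := by
        rw [hdual_jump m'' hm''1 hm''2, hnm]
        exact h3
      obtain ⟨r, hr1, hrk, heq⟩ := WeiAux.jump_wei hd hm''1 hm''2 hj
      refine ⟨r, hr1, hEdual ▸ hrk, ?_⟩
      rw [← heq]
      push_cast [Nat.cast_sub (by omega : m' ≤ n + 1)]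
      omega
  rw [hA, hB]
  constructor
  · rw [Set.disjoint_left]
    rintro m ⟨m1, ha1, ha2, rfl, haJ⟩ ⟨m2, hb1, hb2, hbe, hbJ⟩
    have : m1 = m2 := by exact_mod_cast hbe
    exact hbJ (this ▸ haJ)
  · ext m
    simp only [Set.mem_union, Set.mem_setOf_eq, Set.mem_Icc]
    constructor
    · rintro (⟨m', h1, h2, rfl, _⟩ | ⟨m', h1, h2, rfl, _⟩) <;> omega
    · rintro ⟨hm1, hm2⟩
      set m' := m.toNat with hm'
      have hm'' : (m' : ℤ) = m := Int.toNat_of_nonneg (by omega)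
      have h1 : 1 ≤ m' := by omega
      have h2 : m' ≤ n := by omega
      by_cases hj : J m'
      · exact Or.inl ⟨m', h1, h2, hm''.symm, hj⟩
      · exact Or.inr ⟨m', h1, h2, hm''.symm, hj⟩
end

section
/- Upper Wei duality: if M = (E, ρ) is a demimatroid with n = |E| and k = ρ(E), then {d^0(M)+1, …, d^{k−1}(M)+1} equals the complement in {1, …, n} of {n − d^0(M*), …, n − d^{n−k−1}(M*)}, where d^r(M) := max{ |X| : ρ(X) = r }. -/
open Finset

/-- The `r`-th upper Wei number `d^r(M) = max { |X| : X ⊆ E, ρ(X) = r }`. -/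
noncomputable def upperWeiNumber {α : Type*} [DecidableEq α] (E : Finset α) (ρ : Finset α → ℤ)
    (r : ℤ) : ℕ :=
  sSup {m : ℕ | ∃ X ⊆ E, ρ X = r ∧ X.card = m}

section Aux

variable {α : Type*} [DecidableEq α] (E : Finset α) (ρ : Finset α → ℤ)

/-- `μ m = min { ρ X : X ⊆ E, |X| = m }`. -/
noncomputable def muFn (m : ℕ) : ℤ :=
  if h : m ≤ E.card then
    (E.powersetCard m).inf' (Finset.powersetCard_nonempty.2 h) ρ else 0

variable {E ρ}

lemma rho_mono_aux (h : IsDemimatroid E ρ) :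
    ∀ n : ℕ, ∀ X Y : Finset α, X ⊆ Y → Y ⊆ E → (Y \ X).card = n →
      ρ X ≤ ρ Y ∧ ρ Y ≤ ρ X + n := by
  intro n
  induction n with
  | zero =>
    intro X Y hXY hY hc
    have hYX : Y ⊆ X := by
      rw [← Finset.sdiff_eq_empty_iff_subset, ← Finset.card_eq_zero, hc]
    have : X = Y := Finset.Subset.antisymm hXY hYX
    subst this; simp
  | succ n ih =>
    intro X Y hXY hY hc
    have hne : (Y \ X).Nonempty := by rw [← Finset.card_pos, hc]; omega
    obtain ⟨x, hx⟩ := hne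
    have hxY : x ∈ Y := (Finset.mem_sdiff.1 hx).1
    have hxX : x ∉ X := (Finset.mem_sdiff.1 hx).2
    have hcard : (Y \ insert x X).card = n := by
      rw [Finset.sdiff_insert, Finset.card_erase_of_mem hx, hc]
      omega
    have h1 := ih (insert x X) Y (Finset.insert_subset hxY hXY) hY hcard
    have h2 := h.2.2 X (hXY.trans hY) x (hY hxY)
    constructor
    · linarith [h2.1, h1.1]
    · push_cast; linarith [h2.2, h1.2]

lemma rho_mono (h : IsDemimatroid E ρ) {X Y : Finset α} (hXY : X ⊆ Y) (hY : Y ⊆ E) :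
    ρ X ≤ ρ Y :=
  (rho_mono_aux h _ X Y hXY hY rfl).1

lemma rho_le_add (h : IsDemimatroid E ρ) {X Y : Finset α} (hXY : X ⊆ Y) (hY : Y ⊆ E) :
    ρ Y ≤ ρ X + ((Y \ X).card : ℤ) :=
  (rho_mono_aux h _ X Y hXY hY rfl).2

lemma grow (h : IsDemimatroid E ρ) :
    ∀ n : ℕ, ∀ X : Finset α, X ⊆ E → (E \ X).card = n → ∀ r : ℤ, ρ X ≤ r → r ≤ ρ E →
      ∃ X', X ⊆ X' ∧ X' ⊆ E ∧ ρ X' = r := by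
  intro n
  induction n with
  | zero =>
    intro X hX hc r h1 h2
    have hXE : X = E := by
      refine Finset.Subset.antisymm hX ?_
      rw [← Finset.sdiff_eq_empty_iff_subset, ← Finset.card_eq_zero, hc]
    subst hXE
    exact ⟨X, Finset.Subset.refl _, hX, le_antisymm h1 h2⟩
  | succ n ih =>
    intro X hX hc r h1 h2
    rcases eq_or_lt_of_le h1 with heq | hlt
    · exact ⟨X, Finset.Subset.refl _, hX, heq⟩
    · have hne : (E \ X).Nonempty := by rw [← Finset.card_pos, hc]; omega
      obtain ⟨x, hx⟩ := hne
      have hxE : x ∈ E := (Finset.mem_sdiff.1 hx).1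
      have hxX : x ∉ X := (Finset.mem_sdiff.1 hx).2
      have hcard : (E \ insert x X).card = n := by
        rw [Finset.sdiff_insert, Finset.card_erase_of_mem hx, hc]
        omega
      have hstep := h.2.2 X hX x hxE
      obtain ⟨X', hs, hs2, hs3⟩ :=
        ih (insert x X) (Finset.insert_subset hxE hX) hcard r (by linarith [hstep.2]) h2
      exact ⟨X', (Finset.subset_insert x X).trans hs, hs2, hs3⟩

lemma mu_le (X : Finset α) (hX : X ⊆ E) : muFn E ρ X.card ≤ ρ X := by
  have hc : X.card ≤ E.card := Finset.card_le_card hX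
  rw [muFn, dif_pos hc]
  exact Finset.inf'_le ρ (Finset.mem_powersetCard.2 ⟨hX, rfl⟩)

lemma mu_exists {m : ℕ} (hm : m ≤ E.card) :
    ∃ X, X ⊆ E ∧ X.card = m ∧ ρ X = muFn E ρ m := by
  obtain ⟨X, hX, hval⟩ :=
    Finset.exists_mem_eq_inf' (Finset.powersetCard_nonempty.2 hm) ρ
  obtain ⟨h1, h2⟩ := Finset.mem_powersetCard.1 hX
  rw [muFn, dif_pos hm]
  exact ⟨X, h1, h2, hval.symm⟩

lemma mu_nonneg (h : IsDemimatroid E ρ) {m : ℕ} (hm : m ≤ E.card) : 0 ≤ muFn E ρ m := by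
  obtain ⟨X, hX, -, hval⟩ := mu_exists (ρ := ρ) hm
  rw [← hval]; exact h.2.1 X hX

lemma mu_zero (h : IsDemimatroid E ρ) : muFn E ρ 0 = 0 := by
  have h1 : muFn E ρ 0 ≤ ρ ∅ := by
    simpa using mu_le (ρ := ρ) ∅ (Finset.empty_subset E)
  rw [h.1] at h1
  exact le_antisymm h1 (mu_nonneg h (Nat.zero_le _))

lemma mu_top : muFn E ρ E.card = ρ E := by
  obtain ⟨X, hX, hc, hval⟩ := mu_exists (ρ := ρ) (le_refl E.card)
  have : X = E := Finset.eq_of_subset_of_card_le hX (le_of_eq hc.symm)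
  rw [← hval, this]

lemma mu_mono_succ (h : IsDemimatroid E ρ) {m : ℕ} (hm : m + 1 ≤ E.card) :
    muFn E ρ m ≤ muFn E ρ (m + 1) := by
  obtain ⟨X, hX, hc, hval⟩ := mu_exists (ρ := ρ) hm
  have hne : X.Nonempty := by rw [← Finset.card_pos, hc]; omega
  obtain ⟨x, hx⟩ := hne
  have h1 : muFn E ρ m ≤ ρ (X.erase x) := by
    have := mu_le (ρ := ρ) (X.erase x) ((Finset.erase_subset x X).trans hX)
    rwa [Finset.card_erase_of_mem hx, hc] at this
  have h2 : ρ (X.erase x) ≤ ρ X := by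
    have := (h.2.2 (X.erase x) ((Finset.erase_subset x X).trans hX) x (hX hx)).1
    rwa [Finset.insert_erase hx] at this
  rw [← hval]; exact h1.trans h2

lemma mu_step (h : IsDemimatroid E ρ) {m : ℕ} (hm : m + 1 ≤ E.card) :
    muFn E ρ (m + 1) ≤ muFn E ρ m + 1 := by
  obtain ⟨X, hX, hc, hval⟩ := mu_exists (ρ := ρ) (by omega : m ≤ E.card)
  have hne : (E \ X).Nonempty := by
    rw [← Finset.card_pos, Finset.card_sdiff_of_subset hX, hc]; omega
  obtain ⟨x, hx⟩ := hne
  have hxE : x ∈ E := (Finset.mem_sdiff.1 hx).1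
  have hxX : x ∉ X := (Finset.mem_sdiff.1 hx).2
  have h1 : muFn E ρ (m + 1) ≤ ρ (insert x X) := by
    have := mu_le (ρ := ρ) (insert x X) (Finset.insert_subset hxE hX)
    rwa [Finset.card_insert_of_notMem hxX, hc] at this
  have h2 := (h.2.2 X hX x hxE).2
  rw [← hval]; linarith

lemma mu_mono (h : IsDemimatroid E ρ) {m m' : ℕ} (hmm : m ≤ m') (hm' : m' ≤ E.card) :
    muFn E ρ m ≤ muFn E ρ m' := by
  revert hm'
  induction m', hmm using Nat.le_induction with
  | base => intro _; exact le_refl _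
  | succ n hn ih =>
    intro hm'
    exact le_trans (ih (by omega)) (mu_mono_succ h hm')

lemma d_spec (h : IsDemimatroid E ρ) {r : ℤ} (h0 : 0 ≤ r) (hr : r ≤ ρ E) :
    (∃ X, X ⊆ E ∧ ρ X = r ∧ X.card = upperWeiNumber E ρ r) ∧
    ∀ X, X ⊆ E → ρ X = r → X.card ≤ upperWeiNumber E ρ r := by
  have hbdd : BddAbove {m : ℕ | ∃ X ⊆ E, ρ X = r ∧ X.card = m} := by
    refine ⟨E.card, fun m hm => ?_⟩
    obtain ⟨X, hX, -, hc⟩ := hm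
    exact hc ▸ Finset.card_le_card hX
  have hne : {m : ℕ | ∃ X ⊆ E, ρ X = r ∧ X.card = m}.Nonempty := by
    obtain ⟨X', h1, h2, h3⟩ := grow h (E \ ∅).card ∅ (Finset.empty_subset E) rfl r
      (by rw [h.1]; exact h0) hr
    exact ⟨X'.card, X', h2, h3, rfl⟩
  have hmem := Nat.sSup_mem hne hbdd
  obtain ⟨X, hX, hr', hc⟩ := hmem
  exact ⟨⟨X, hX, hr', hc⟩, fun Y hY hrY => le_csSup hbdd ⟨Y, hY, hrY, rfl⟩⟩

lemma le_d_of_mu_le (h : IsDemimatroid E ρ) {r : ℤ} (h0 : 0 ≤ r) (hr : r ≤ ρ E)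
    {m : ℕ} (hm : m ≤ E.card) (hmu : muFn E ρ m ≤ r) : m ≤ upperWeiNumber E ρ r := by
  obtain ⟨X, hX, hc, hval⟩ := mu_exists (ρ := ρ) hm
  obtain ⟨X', h1, h2, h3⟩ := grow h (E \ X).card X hX rfl r (by rw [hval]; exact hmu) hr
  calc m = X.card := hc.symm
    _ ≤ X'.card := Finset.card_le_card h1
    _ ≤ upperWeiNumber E ρ r := (d_spec h h0 hr).2 X' h2 h3

lemma jump_char (h : IsDemimatroid E ρ) (i : ℤ) :
    (∃ r : ℤ, 0 ≤ r ∧ r ≤ ρ E - 1 ∧ i = (upperWeiNumber E ρ r : ℤ) + 1) ↔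
    (∃ j : ℕ, 1 ≤ j ∧ j ≤ E.card ∧ i = (j : ℤ) ∧
      muFn E ρ j = muFn E ρ (j - 1) + 1) := by
  constructor
  · rintro ⟨r, h0, hr1, rfl⟩
    have hr : r ≤ ρ E := by linarith
    set d := upperWeiNumber E ρ r with hd
    obtain ⟨⟨X, hX, hrX, hcX⟩, hmax⟩ := d_spec h h0 hr
    have hdn : d < E.card := by
      rcases lt_or_eq_of_le (by rw [hd, ← hcX]; exact Finset.card_le_card hX : d ≤ E.card) with h' | h'
      · exact h'
      · exfalso
        have : X = E := Finset.eq_of_subset_of_card_le hX (by omega)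
        rw [this] at hrX; omega
    have hmud : muFn E ρ d ≤ r := by
      have := mu_le (ρ := ρ) X hX
      rwa [hcX, hrX] at this
    have hmud1 : r < muFn E ρ (d + 1) := by
      by_contra h'
      push_neg at h'
      have := le_d_of_mu_le h h0 hr (by omega) h'
      omega
    have hstep := mu_step h (by omega : d + 1 ≤ E.card)
    refine ⟨d + 1, by omega, by omega, by push_cast; ring, ?_⟩
    have : d + 1 - 1 = d := by omega
    rw [this]; omega
  · rintro ⟨j, hj1, hjn, rfl, hjump⟩
    refine ⟨muFn E ρ (j - 1), mu_nonneg h (by omega), ?_, ?_⟩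
    · have : muFn E ρ j ≤ muFn E ρ E.card := mu_mono h hjn (le_refl _)
      rw [mu_top] at this
      omega
    · set r := muFn E ρ (j - 1) with hr0
      have h0 : 0 ≤ r := mu_nonneg h (by omega)
      have hr : r ≤ ρ E := by
        have h1 : muFn E ρ (j - 1) ≤ muFn E ρ E.card := mu_mono h (by omega) (le_refl _)
        rw [mu_top] at h1; exact h1
      have hle : j - 1 ≤ upperWeiNumber E ρ r :=
        le_d_of_mu_le h h0 hr (by omega) (le_refl _)
      have hge : upperWeiNumber E ρ r < j := by
        by_contra h'
        push_neg at h'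
        obtain ⟨⟨X, hX, hrX, hcX⟩, -⟩ := d_spec h h0 hr
        have h1 : muFn E ρ j ≤ muFn E ρ X.card :=
          mu_mono h (hcX ▸ h') (Finset.card_le_card hX)
        have h2 := mu_le (ρ := ρ) X hX
        rw [hrX] at h2
        omega
      have : upperWeiNumber E ρ r = j - 1 := by omega
      rw [this]
      push_cast [hj1]
      ring

lemma dual_demimatroid (h : IsDemimatroid E ρ) : IsDemimatroid E (dualFn E ρ) := by
  refine ⟨?_, ?_, ?_⟩
  · simp [dualFn]
  · intro X hX
    have h1 : ρ E ≤ ρ (E \ X) + ((E \ (E \ X)).card : ℤ) :=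
      rho_le_add h (Finset.sdiff_subset) (le_refl E)
    rw [Finset.sdiff_sdiff_eq_self hX] at h1
    simp only [dualFn]
    linarith
  · intro X hX x hx
    by_cases hxX : x ∈ X
    · rw [Finset.insert_eq_self.2 hxX]
      constructor <;> linarith
    · have hmem : x ∈ E \ X := Finset.mem_sdiff.2 ⟨hx, hxX⟩
      have hins : insert x ((E \ X).erase x) = E \ X := Finset.insert_erase hmem
      have hsub : (E \ X).erase x ⊆ E := (Finset.erase_subset x _).trans Finset.sdiff_subset
      have hstep := h.2.2 ((E \ X).erase x) hsub x hx
      rw [hins] at hstep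
      have hEins : E \ insert x X = (E \ X).erase x := Finset.sdiff_insert E X x
      have hcard : ((insert x X).card : ℤ) = X.card + 1 := by
        rw [Finset.card_insert_of_notMem hxX]; push_cast; ring
      simp only [dualFn, hEins, hcard]
      constructor <;> linarith [hstep.1, hstep.2]

lemma dual_rank : dualFn E ρ E = (E.card : ℤ) - ρ E + ρ ∅ := by
  simp only [dualFn, Finset.sdiff_self]
  ring

lemma mu_dual (h : IsDemimatroid E ρ) {m : ℕ} (hm : m ≤ E.card) :
    muFn E (dualFn E ρ) m = (m : ℤ) - ρ E + muFn E ρ (E.card - m) := by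
  apply le_antisymm
  · obtain ⟨Z, hZ, hcZ, hvZ⟩ := mu_exists (ρ := ρ) (by omega : E.card - m ≤ E.card)
    have hY : E \ Z ⊆ E := Finset.sdiff_subset
    have hcY : (E \ Z).card = m := by
      rw [Finset.card_sdiff_of_subset hZ, hcZ]; omega
    have h1 : muFn E (dualFn E ρ) m ≤ dualFn E ρ (E \ Z) := by
      have := mu_le (ρ := dualFn E ρ) (E \ Z) hY
      rwa [hcY] at this
    rw [dualFn] at h1
    rw [Finset.sdiff_sdiff_eq_self hZ, hcY, hvZ] at h1
    linarith
  · obtain ⟨Y, hY, hcY, hvY⟩ := mu_exists (ρ := dualFn E ρ) hm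
    have h1 : muFn E ρ (E.card - m) ≤ ρ (E \ Y) := by
      have := mu_le (ρ := ρ) (E \ Y) Finset.sdiff_subset
      rwa [Finset.card_sdiff_of_subset hY, hcY] at this
    rw [← hvY, dualFn, hcY]
    linarith

end Aux

theorem upper_wei_duality {α : Type*} [DecidableEq α]
    (E : Finset α) (ρ : Finset α → ℤ) (h : IsDemimatroid E ρ) :
    {m : ℤ | ∃ r : ℤ, 0 ≤ r ∧ r ≤ ρ E - 1 ∧ m = (upperWeiNumber E ρ r : ℤ) + 1} =
      Set.Icc 1 (E.card : ℤ) \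
        {m : ℤ | ∃ r : ℤ, 0 ≤ r ∧ r ≤ (E.card : ℤ) - ρ E - 1 ∧
          m = (E.card : ℤ) - (upperWeiNumber E (dualFn E ρ) r : ℤ)} := by
  have hdual := dual_demimatroid h
  have hrank : dualFn E ρ E = (E.card : ℤ) - ρ E := by
    rw [dual_rank, h.1]; ring
  ext i
  simp only [Set.mem_setOf_eq, Set.mem_diff, Set.mem_Icc]
  rw [jump_char h i]
  have hB : (∃ r : ℤ, 0 ≤ r ∧ r ≤ (E.card : ℤ) - ρ E - 1 ∧
      i = (E.card : ℤ) - (upperWeiNumber E (dualFn E ρ) r : ℤ)) ↔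
      (∃ j : ℕ, 1 ≤ j ∧ j ≤ E.card ∧ (E.card : ℤ) + 1 - i = (j : ℤ) ∧
        muFn E (dualFn E ρ) j = muFn E (dualFn E ρ) (j - 1) + 1) := by
    rw [← jump_char hdual ((E.card : ℤ) + 1 - i), hrank]
    constructor
    · rintro ⟨r, h1, h2, h3⟩; exact ⟨r, h1, h2, by omega⟩
    · rintro ⟨r, h1, h2, h3⟩; exact ⟨r, h1, h2, by omega⟩
  rw [hB]
  constructor
  · rintro ⟨j, hj1, hjn, rfl, hjump⟩
    refine ⟨⟨by exact_mod_cast hj1, by exact_mod_cast hjn⟩, ?_⟩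
    rintro ⟨j', hj'1, hj'n, heq, hjump'⟩
    have hjj' : j' = E.card + 1 - j := by omega
    subst hjj'
    rw [mu_dual h (by omega), mu_dual h (by omega)] at hjump'
    have e1 : E.card - (E.card + 1 - j) = j - 1 := by omega
    have e2 : E.card + 1 - j - 1 = E.card - j := by omega
    have e3 : E.card - (E.card - j) = j := by omega
    rw [e1, e2, e3] at hjump'
    have : ((E.card + 1 - j : ℕ) : ℤ) = (E.card : ℤ) + 1 - j := by omega
    rw [this] at hjump'
    have : ((E.card - j : ℕ) : ℤ) = (E.card : ℤ) - j := by omega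
    rw [this] at hjump'
    omega
  · rintro ⟨⟨hi1, hin⟩, hnB⟩
    set j := i.toNat with hj
    have hij : i = (j : ℤ) := by omega
    have hj1 : 1 ≤ j := by omega
    have hjn : j ≤ E.card := by omega
    refine ⟨j, hj1, hjn, hij, ?_⟩
    have hmono := mu_mono_succ h (show j - 1 + 1 ≤ E.card by omega)
    have hstep := mu_step h (show j - 1 + 1 ≤ E.card by omega)
    rw [show j - 1 + 1 = j by omega] at hmono hstep
    by_contra hne
    apply hnB
    refine ⟨E.card + 1 - j, by omega, by omega, by omega, ?_⟩
    rw [mu_dual h (by omega), mu_dual h (by omega)]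
    have e1 : E.card - (E.card + 1 - j) = j - 1 := by omega
    have e2 : E.card + 1 - j - 1 = E.card - j := by omega
    have e3 : E.card - (E.card - j) = j := by omega
    rw [e1, e2, e3]
    have c1 : ((E.card + 1 - j : ℕ) : ℤ) = (E.card : ℤ) + 1 - j := by omega
    have c2 : ((E.card - j : ℕ) : ℤ) = (E.card : ℤ) - j := by omega
    rw [c1, c2]
    omega
end

section
/- For a nontrivial demimatroid M of rank k, the upper Wei numbers satisfy 0 ≤ d^0(M) < d^1(M) < ⋯ < d^k(M) = |E|, and if ρ(X) ≤ r then |X| ≤ d^r(M). -/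
open Finset

lemma dem_extend {α : Type*} [DecidableEq α] (E : Finset α) (ρ : Finset α → ℤ)
    (h : IsDemimatroid E ρ) :
    ∀ n (X : Finset α), (E \ X).card = n → X ⊆ E → ∀ r : ℤ, ρ X ≤ r → r ≤ ρ E →
      ∃ Z, X ⊆ Z ∧ Z ⊆ E ∧ ρ Z = r := by
  intro n
  induction n with
  | zero =>
    intro X hcard hXE r h1 h2
    have hXE' : X = E := by
      have := Finset.sdiff_eq_empty_iff_subset.1 (Finset.card_eq_zero.1 hcard)
      exact Finset.Subset.antisymm hXE this
    rw [hXE'] at h1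
    exact ⟨E, hXE' ▸ Finset.Subset.refl _, Finset.Subset.refl _, le_antisymm h1 h2⟩
  | succ n ih =>
    intro X hcard hXE r h1 h2
    rcases eq_or_lt_of_le h1 with heq | hlt
    · exact ⟨X, Finset.Subset.refl _, hXE, heq⟩
    · have hne : (E \ X).Nonempty := Finset.card_pos.1 (by omega)
      obtain ⟨x, hx⟩ := hne
      have hxE : x ∈ E := (Finset.mem_sdiff.1 hx).1
      have hxX : x ∉ X := (Finset.mem_sdiff.1 hx).2
      have hins : insert x X ⊆ E := Finset.insert_subset hxE hXE
      have hρ := (h.2.2 X hXE x hxE).2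
      have hcard' : (E \ insert x X).card = n := by
        have : E \ insert x X = (E \ X).erase x := by
          ext y; simp [Finset.mem_sdiff, Finset.mem_erase]; tauto
        rw [this, Finset.card_erase_of_mem hx, hcard]; omega
      obtain ⟨Z, hZ1, hZ2, hZ3⟩ := ih (insert x X) hcard' hins r (by omega) h2
      exact ⟨Z, (Finset.subset_insert x X).trans hZ1, hZ2, hZ3⟩

lemma dem_bdd {α : Type*} [DecidableEq α] (E : Finset α) (ρ : Finset α → ℤ) (r : ℤ) :
    BddAbove {m : ℕ | ∃ X ⊆ E, ρ X = r ∧ X.card = m} := by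
  refine ⟨E.card, fun m hm => ?_⟩
  obtain ⟨X, hX, _, hc⟩ := hm
  exact hc ▸ Finset.card_le_card hX

theorem upper_wei_chain {α : Type*} [DecidableEq α]
    (E : Finset α) (ρ : Finset α → ℤ) (h : IsDemimatroid E ρ) (hnt : 1 ≤ ρ E) :
    (∀ r : ℤ, 0 ≤ r → r < ρ E → upperWeiNumber E ρ r < upperWeiNumber E ρ (r + 1)) ∧
    upperWeiNumber E ρ (ρ E) = E.card ∧
    (∀ X ⊆ E, ∀ r : ℤ, 0 ≤ r → r ≤ ρ E → ρ X ≤ r → (X.card : ℤ) ≤ upperWeiNumber E ρ r) := by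
  -- part 3 first, as a helper
  have key : ∀ X ⊆ E, ∀ r : ℤ, 0 ≤ r → r ≤ ρ E → ρ X ≤ r →
      (X.card : ℤ) ≤ upperWeiNumber E ρ r := by
    intro X hXE r _ h2 h1
    obtain ⟨Z, hZ1, hZ2, hZ3⟩ := dem_extend E ρ h (E \ X).card X rfl hXE r h1 h2
    have hmem : Z.card ∈ {m : ℕ | ∃ X ⊆ E, ρ X = r ∧ X.card = m} := ⟨Z, hZ2, hZ3, rfl⟩
    have := le_csSup (dem_bdd E ρ r) hmem
    have hXZ : X.card ≤ Z.card := Finset.card_le_card hZ1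
    exact_mod_cast le_trans hXZ this
  have hnonempty : ∀ r : ℤ, 0 ≤ r → r ≤ ρ E →
      {m : ℕ | ∃ X ⊆ E, ρ X = r ∧ X.card = m}.Nonempty := by
    intro r h0 h2
    obtain ⟨Z, _, hZ2, hZ3⟩ := dem_extend E ρ h (E \ ∅).card ∅ rfl (Finset.empty_subset E) r
      (h.1 ▸ h0) h2
    exact ⟨Z.card, Z, hZ2, hZ3, rfl⟩
  refine ⟨?_, ?_, key⟩
  · intro r h0 hr
    unfold upperWeiNumber
    -- pick X achieving sSup at level r
    have hmem := Nat.sSup_mem (hnonempty r h0 (le_of_lt hr)) (dem_bdd E ρ r)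
    obtain ⟨X, hXE, hρX, hcard⟩ := hmem
    -- X ≠ E since ρ X = r < ρ E
    have hXne : X ≠ E := fun he => by rw [he] at hρX; omega
    have hne : (E \ X).Nonempty := by
      rw [Finset.sdiff_nonempty]
      exact fun hsub => hXne (Finset.Subset.antisymm hXE hsub)
    obtain ⟨x, hx⟩ := hne
    have hxE : x ∈ E := (Finset.mem_sdiff.1 hx).1
    have hxX : x ∉ X := (Finset.mem_sdiff.1 hx).2
    have hρi := h.2.2 X hXE x hxE
    have hins : insert x X ⊆ E := Finset.insert_subset hxE hXE
    -- ρ (insert x X) must be r+1, else contradiction with maximality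
    have hval : ρ (insert x X) = r + 1 := by
      rcases eq_or_lt_of_le hρi.1 with heq | hlt
      · exfalso
        have hmem' : (insert x X).card ∈ {m : ℕ | ∃ X ⊆ E, ρ X = r ∧ X.card = m} :=
          ⟨insert x X, hins, heq ▸ hρX, rfl⟩
        have := le_csSup (dem_bdd E ρ r) hmem'
        rw [Finset.card_insert_of_notMem hxX, hcard] at this
        omega
      · omega
    have hmem'' : (insert x X).card ∈ {m : ℕ | ∃ X ⊆ E, ρ X = r + 1 ∧ X.card = m} :=
      ⟨insert x X, hins, hval, rfl⟩
    have := le_csSup (dem_bdd E ρ (r + 1)) hmem''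
    rw [Finset.card_insert_of_notMem hxX, hcard] at this
    omega
  · have h1 : (E.card : ℤ) ≤ upperWeiNumber E ρ (ρ E) :=
      key E (Finset.Subset.refl E) (ρ E) (by omega) le_rfl le_rfl
    have h2 : upperWeiNumber E ρ (ρ E) ≤ E.card := by
      apply csSup_le (hnonempty (ρ E) (by omega) le_rfl)
      rintro m ⟨X, hX, _, hc⟩
      exact hc ▸ Finset.card_le_card hX
    have := h2
    omega
end

section
/- MacWilliams identity for combinatroids: W_{M*}(x, y, t) = t^{−η(M)} W_M(x + (t−1)y, x − y, t), where W_M(x,y,t) := (x−y)^{η(M)} y^{ρ(M)} T_M(x/y, (x+(t−1)y)/(x−y)), η(M) = |E| − ρ(E), ρ(M) = ρ(E). -/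
open Finset

/-- The Tutte polynomial (rational function) of a combinatroid,
`T_M(x,y) = Σ_{A ⊆ E} (x-1)^{ρ(E)-ρ(A)} (y-1)^{|A|-ρ(A)}`. -/
def tutte {α : Type*} [DecidableEq α] (E : Finset α) (ρ : Finset α → ℤ) (x y : ℚ) : ℚ :=
  ∑ A ∈ E.powerset, (x - 1) ^ (ρ E - ρ A) * (y - 1) ^ ((A.card : ℤ) - ρ A)

/-- The Hamming polynomial of a combinatroid,
`W_M(x,y,t) = (x-y)^{η(M)} y^{ρ(M)} T_M(x/y, (x+(t-1)y)/(x-y))`. -/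
def hamming {α : Type*} [DecidableEq α] (E : Finset α) (ρ : Finset α → ℤ) (x y t : ℚ) : ℚ :=
  (x - y) ^ ((E.card : ℤ) - ρ E) * y ^ (ρ E) *
    tutte E ρ (x / y) ((x + (t - 1) * y) / (x - y))

theorem macwilliams_identity {α : Type*} [DecidableEq α]
    (E : Finset α) (ρ : Finset α → ℤ) (h0 : ρ ∅ = 0) :
    ∀ x y t : ℚ, y ≠ 0 → t ≠ 0 → x ≠ y →
      hamming E (dualFn E ρ) x y t =
        t ^ (-((E.card : ℤ) - ρ E)) * hamming E ρ (x + (t - 1) * y) (x - y) t := by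
  intro x y t hy ht hxy
  have hxy' : x - y ≠ 0 := sub_ne_zero.mpr hxy
  have hdE : dualFn E ρ E = (E.card : ℤ) - ρ E := by simp [dualFn, h0]
  -- simplify the arguments of tutte on the RHS
  have e1 : x + (t - 1) * y - (x - y) = t * y := by ring
  have e2 : (x + (t - 1) * y + (t - 1) * (x - y)) / (t * y) = x / y := by
    rw [div_eq_div_iff (by simp [ht, hy]) hy]; ring
  have e3 : x / y - 1 = (x - y) / y := by field_simp
  have e4 : (x + (t - 1) * y) / (x - y) - 1 = t * y / (x - y) := by
    field_simp; ring
  set U : ℚ := (x - y) / y with hU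
  set V : ℚ := t * y / (x - y) with hV
  have hU0 : U ≠ 0 := div_ne_zero hxy' hy
  have hV0 : V ≠ 0 := div_ne_zero (mul_ne_zero ht hy) hxy'
  unfold hamming tutte
  rw [e1, e2, e3, e4, hdE]
  have hsum : ∑ A ∈ E.powerset,
      U ^ ((E.card : ℤ) - ρ E - dualFn E ρ A) * V ^ ((A.card : ℤ) - dualFn E ρ A)
      = ∑ A ∈ E.powerset, V ^ (ρ E - ρ A) * U ^ ((A.card : ℤ) - ρ A) := by
    apply Finset.sum_nbij' (i := fun A => E \ A) (j := fun A => E \ A)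
    · intro A hA; simp
    · intro A hA; simp
    · intro A hA
      simp only [Finset.mem_powerset] at hA
      exact Finset.sdiff_sdiff_eq_self hA
    · intro A hA
      simp only [Finset.mem_powerset] at hA
      exact Finset.sdiff_sdiff_eq_self hA
    · intro A hA
      simp only [Finset.mem_powerset] at hA
      have hc : ((E \ A).card : ℤ) = (E.card : ℤ) - A.card := by
        rw [Finset.card_sdiff_of_subset hA]; push_cast [Finset.card_le_card hA]; ring
      have h1 : (E.card : ℤ) - ρ E - dualFn E ρ A = ((E \ A).card : ℤ) - ρ (E \ A) := by
        simp only [dualFn]; rw [hc]; ring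
      have h2 : (A.card : ℤ) - dualFn E ρ A = ρ E - ρ (E \ A) := by
        simp only [dualFn]; ring
      rw [h1, h2, mul_comm]
  rw [hsum]
  have hrest : ((E.card : ℤ) - ((E.card : ℤ) - ρ E)) = ρ E := by ring
  rw [hrest]
  rw [Finset.mul_sum, Finset.mul_sum, Finset.mul_sum]
  apply Finset.sum_congr rfl
  intro A hA
  have ht' : t * y ≠ 0 := mul_ne_zero ht hy
  rw [mul_zpow]
  have : t ^ (-((E.card : ℤ) - ρ E)) * (t ^ ((E.card : ℤ) - ρ E) * y ^ ((E.card : ℤ) - ρ E) * (x - y) ^ ρ E * (V ^ (ρ E - ρ A) * U ^ ((A.card : ℤ) - ρ A)))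
      = (t ^ (-((E.card : ℤ) - ρ E)) * t ^ ((E.card : ℤ) - ρ E)) * (y ^ ((E.card : ℤ) - ρ E) * (x - y) ^ ρ E * (V ^ (ρ E - ρ A) * U ^ ((A.card : ℤ) - ρ A))) := by
    ring
  rw [this, ← zpow_add₀ ht, neg_add_cancel, zpow_zero, one_mul]
  ring
end

section
/- For a demimatroid M = (E, ρ) with nullity function η and 0 ≤ i ≤ η(E), the i-th elongation ρ^{[i]}(σ) := min{|σ|, ρ(σ) + i} defines a demimatroid M[i] of rank ρ(E) + i, its nullity function is η^{[i]}(σ) = max{0, η(σ) − i}, and d_{r+1}(M°) = d_1(M[r]°), where M° denotes the demimatroid with rank function η and d_s(N) := min{|X| : rank_N(X) = s}. -/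
open Finset

/-- The `i`-th elongation of a rank function: `ρ^[i](σ) = min(|σ|, ρ(σ) + i)`. -/
def elongation {α : Type*} [DecidableEq α] (ρ : Finset α → ℤ) (i : ℤ) : Finset α → ℤ :=
  fun σ => min (σ.card : ℤ) (ρ σ + i)

theorem elongation_properties {α : Type*} [DecidableEq α]
    (E : Finset α) (ρ : Finset α → ℤ) (h : IsDemimatroid E ρ)
    (i : ℤ) (hi0 : 0 ≤ i) (hi : i ≤ (E.card : ℤ) - ρ E) :
    IsDemimatroid E (elongation ρ i) ∧
    elongation ρ i E = ρ E + i ∧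
    (∀ σ ⊆ E, (σ.card : ℤ) - elongation ρ i σ = max 0 ((σ.card : ℤ) - ρ σ - i)) ∧
    (∀ r : ℤ, 0 ≤ r → r + 1 ≤ (E.card : ℤ) - ρ E →
      weiNumber E (fun σ => (σ.card : ℤ) - ρ σ) (r + 1) =
        weiNumber E (fun σ => (σ.card : ℤ) - elongation ρ r σ) 1) := by
  obtain ⟨h0, hnn, hstep⟩ := h
  refine ⟨⟨?_, ?_, ?_⟩, ?_, ?_, ?_⟩
  · simp [elongation]
    omega
  · intro X hX
    have := hnn X hX
    simp only [elongation]
    have : (0:ℤ) ≤ (X.card : ℤ) := by positivity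
    omega
  · intro X hX x hx
    have h1 := hstep X hX x hx
    have h2 : X.card ≤ (insert x X).card := Finset.card_le_card (Finset.subset_insert x X)
    have h3 : (insert x X).card ≤ X.card + 1 := Finset.card_insert_le x X
    simp only [elongation]
    constructor <;> omega
  · simp only [elongation]
    omega
  · intro σ hσ
    simp only [elongation]
    omega
  · intro r hr0 hr1
    unfold weiNumber
    congr 1
    ext m
    constructor
    · rintro ⟨X, hX, hval, hc⟩
      refine ⟨X, hX, ?_, hc⟩
      simp only [elongation] at hval ⊢
      omega
    · rintro ⟨X, hX, hval, hc⟩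
      refine ⟨X, hX, ?_, hc⟩
      simp only [elongation] at hval ⊢
      omega
end
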